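/- Let f : ℝ → ℝ be a nonnegative probability density (f ≥ 0, ∫ f = 1) supported in the interval (-M, M) for some M > 0, and suppose f ∈ L^p(ℝ) for some p with 1 < p < 2. Then the logarithmic energy ∬ log|s - t| f(s) f(t) ds dt is finite (not -∞); in fact |∬ log|s-t| f(s)f(t) ds dt| ≤ ‖f‖_p · ‖f‖_p · ‖L‖_{q/2}, where L(t) = 1_{(-4M,4M)}(t)·log|t| and 1/p + 1/q = 1. -/

import Mathlib

open MeasureTheory Set
open Real
open scoped ENNReal


lemma abs_log_rpow_le {c : ℝ} (hc : 1 ≤ c) {x : ℝ} (hx : 0 < x) :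
    |Real.log x| ^ c ≤ (4*c) ^ c * (x ^ (1/2 : ℝ) + x ^ (-(1/2) : ℝ)) := by
  have hc0 : 0 < c := lt_of_lt_of_le one_pos hc
  set ε : ℝ := 1 / (2 * c) with hε_def
  have hε : 0 < ε := by positivity
  have hεinv : ε⁻¹ = 2 * c := by rw [hε_def]; field_simp
  have hεc : ε * c = 1/2 := by rw [hε_def]; field_simp
  have hlog : ∀ y : ℝ, 0 < y → Real.log y ≤ y ^ ε / ε := by
    intro y hy
    have h1 : Real.log (y ^ ε) ≤ y ^ ε - 1 := Real.log_le_sub_one_of_pos (Real.rpow_pos_of_pos hy ε)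
    rw [Real.log_rpow hy] at h1
    have heq : Real.log y = (ε * Real.log y) / ε := by field_simp
    rw [heq]
    gcongr
    linarith
  have hxε : (0:ℝ) < x ^ ε := Real.rpow_pos_of_pos hx ε
  have hxεn : (0:ℝ) < x ^ (-ε) := Real.rpow_pos_of_pos hx _
  have habs : |Real.log x| ≤ (x ^ ε + x ^ (-ε)) / ε := by
    have h1 := hlog x hx
    have h2 := hlog x⁻¹ (inv_pos.mpr hx)
    rw [Real.log_inv, Real.inv_rpow hx.le, ← Real.rpow_neg hx.le] at h2
    rw [abs_le]
    constructor
    · have hle : x ^ (-ε) / ε ≤ (x ^ ε + x ^ (-ε)) / ε := by gcongr; linarith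
      linarith
    · have hle : x ^ ε / ε ≤ (x ^ ε + x ^ (-ε)) / ε := by gcongr; linarith
      linarith
  have hsum : (0:ℝ) ≤ x ^ ε + x ^ (-ε) := by positivity
  calc |Real.log x| ^ c ≤ ((x ^ ε + x ^ (-ε)) / ε) ^ c :=
        Real.rpow_le_rpow (abs_nonneg _) habs hc0.le
    _ = (x ^ ε + x ^ (-ε)) ^ c * (2*c) ^ c := by
        rw [div_eq_mul_inv, Real.mul_rpow hsum (by positivity), hεinv]
    _ ≤ (2 * max (x ^ ε) (x ^ (-ε))) ^ c * (2*c) ^ c := by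
        apply mul_le_mul_of_nonneg_right _ (by positivity)
        apply Real.rpow_le_rpow hsum _ hc0.le
        rcases le_total (x ^ ε) (x ^ (-ε)) with h|h
        · rw [max_eq_right h]; linarith
        · rw [max_eq_left h]; linarith
    _ = 2 ^ c * (max (x ^ ε) (x ^ (-ε))) ^ c * (2*c) ^ c := by
        rw [Real.mul_rpow (by norm_num) (le_max_of_le_left hxε.le)]
    _ ≤ 2 ^ c * ((x ^ ε) ^ c + (x ^ (-ε)) ^ c) * (2*c) ^ c := by
        apply mul_le_mul_of_nonneg_right _ (by positivity)
        apply mul_le_mul_of_nonneg_left _ (by positivity)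
        rcases le_total (x ^ ε) (x ^ (-ε)) with h|h
        · rw [max_eq_right h]
          nlinarith [Real.rpow_nonneg hxε.le c, Real.rpow_nonneg hxεn.le c]
        · rw [max_eq_left h]
          nlinarith [Real.rpow_nonneg hxε.le c, Real.rpow_nonneg hxεn.le c]
    _ = (4*c) ^ c * (x ^ (1/2 : ℝ) + x ^ (-(1/2) : ℝ)) := by
        rw [← Real.rpow_mul hx.le, ← Real.rpow_mul hx.le, neg_mul, hεc]
        have h4 : (4*c:ℝ) ^ c = 2 ^ c * (2*c) ^ c := by
          rw [show (4*c:ℝ) = 2*(2*c) by ring, Real.mul_rpow (by norm_num) (by positivity)]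
        rw [h4]; ring

lemma integrableOn_abs_log_abs_rpow {c A : ℝ} (hc : 1 ≤ c) (hA : 0 < A) :
    IntegrableOn (fun t : ℝ => |Real.log (|t|)| ^ c) (Set.Ioo (-A) A) volume := by
  have hc0 : 0 < c := lt_of_lt_of_le one_pos hc
  have hmeas : Measurable (fun t : ℝ => |Real.log (|t|)| ^ c) :=
    (measurable_abs.log.abs).pow measurable_const
  have hright : IntegrableOn (fun t : ℝ => |Real.log (|t|)| ^ c) (Set.Ioc 0 A) volume := by
    have hg : IntegrableOn
        (fun x : ℝ => (4*c) ^ c * (x ^ (1/2:ℝ) + x ^ (-(1/2):ℝ))) (Set.Ioc 0 A) volume := by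
      apply Integrable.const_mul
      exact ((intervalIntegral.intervalIntegrable_rpow' (by norm_num : (-1:ℝ) < 1/2)).1).add
        ((intervalIntegral.intervalIntegrable_rpow' (by norm_num : (-1:ℝ) < -(1/2))).1)
    apply Integrable.mono' hg (hmeas.aestronglyMeasurable.restrict)
    filter_upwards [ae_restrict_mem measurableSet_Ioc] with x hx
    rw [Real.norm_eq_abs, abs_of_nonneg (Real.rpow_nonneg (abs_nonneg _) c),
      abs_of_pos hx.1]
    exact abs_log_rpow_le hc hx.1
  have hIco : IntegrableOn (fun t : ℝ => |Real.log (|t|)| ^ c) (Set.Ico 0 A) volume := by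
    rw [integrableOn_Ico_iff_integrableOn_Ioo,
      ← integrableOn_Ioc_iff_integrableOn_Ioo]
    exact hright
  have hleft : IntegrableOn (fun t : ℝ => |Real.log (|t|)| ^ c) (Set.Ioc (-A) 0) volume := by
    rw [← (Measure.measurePreserving_neg (volume : Measure ℝ)).integrableOn_comp_preimage
        (Homeomorph.neg ℝ).measurableEmbedding]
    have h1 : (Neg.neg ⁻¹' Set.Ioc (-A) 0 : Set ℝ) = Set.Ico 0 A := by
      ext x
      simp only [Set.mem_preimage, Set.mem_Ioc, Set.mem_Ico]
      constructor <;> intro h <;> constructor <;> linarith [h.1, h.2]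
    have h2 : ((fun t : ℝ => |Real.log (|t|)| ^ c) ∘ Neg.neg) = fun t : ℝ => |Real.log (|t|)| ^ c := by
      funext t; simp [abs_neg]
    rw [h1, h2]
    exact hIco
  apply IntegrableOn.mono_set (hleft.union hright)
  intro x hx
  rcases le_or_gt x 0 with h|h
  · exact Or.inl ⟨hx.1, h⟩
  · exact Or.inr ⟨h, hx.2.le⟩

lemma lint_shift (h : ℝ → ℝ≥0∞) (hh : Measurable h) (s : ℝ) :
    ∫⁻ t, h (s - t) ∂(volume : Measure ℝ) = ∫⁻ t, h t ∂volume := by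
  calc ∫⁻ t, h (s - t) ∂volume = ∫⁻ t, h (s + t) ∂volume := by
        have := (Measure.measurePreserving_neg (volume : Measure ℝ)).lintegral_comp
          (f := fun u => h (s + u)) (hh.comp (measurable_const.add measurable_id))
        simpa [sub_eq_add_neg] using this
    _ = ∫⁻ t, h t ∂volume := lintegral_add_left_eq_self h s

/-- If `f` is a probability density supported in `(-M, M)` with `f ∈ L^p`, `1 < p < 2`,
then the logarithmic energy `∬ log|s-t| f(s) f(t) ds dt` is finite; in fact its
absolute value is bounded by `‖f‖_p · ‖f‖_p · ‖L‖_{q/2}` where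
`L = 1_{(-4M,4M)} · log|·|` and `1/p + 1/q = 1`. -/
theorem log_energy_finite_of_Lp_density
    (M : ℝ) (hM : 0 < M) (f : ℝ → ℝ)
    (hf_nonneg : ∀ x, 0 ≤ f x)
    (hf_int : Integrable f)
    (hf_prob : ∫ x, f x = 1)
    (hf_supp : ∀ x, x ∉ Set.Ioo (-M) M → f x = 0)
    (p q : ℝ) (hp : 1 < p) (hp2 : p < 2) (hpq : 1/p + 1/q = 1)
    (hf_Lp : MemLp f (ENNReal.ofReal p) (volume : Measure ℝ))
    (L : ℝ → ℝ)
    (hL : L = Set.indicator (Set.Ioo (-(4*M)) (4*M)) (fun t : ℝ => Real.log |t|)) :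
    Integrable (fun z : ℝ × ℝ => Real.log |z.1 - z.2| * f z.1 * f z.2)
      ((volume : Measure ℝ).prod volume) ∧
    |∫ z : ℝ × ℝ, Real.log |z.1 - z.2| * f z.1 * f z.2
        ∂((volume : Measure ℝ).prod volume)| ≤
      (eLpNorm f (ENNReal.ofReal p) volume).toReal *
      (eLpNorm f (ENNReal.ofReal p) volume).toReal *
      (eLpNorm L (ENNReal.ofReal (q/2)) volume).toReal := by
  -- basic exponent arithmetic
  have hp0 : 0 < p := by linarith
  have hip1 : 1/p < 1 := by rw [div_lt_one hp0]; exact hp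
  have hip2 : 1/2 < 1/p := by rw [div_lt_div_iff₀ two_pos hp0]; linarith
  have hiq_pos : 0 < 1/q := by linarith
  have hq0 : 0 < q := one_div_pos.mp hiq_pos
  have hiq2 : 1/q < 1/2 := by linarith
  have hq2 : 2 < q := by
    have h2q : (1:ℝ) = (1/q) * q := by field_simp
    have := mul_lt_mul_of_pos_right hiq2 hq0
    linarith
  have hc1 : (1:ℝ) ≤ q/2 := by linarith
  have hc0 : (0:ℝ) < q/2 := by linarith
  have hθ : (0:ℝ) ≤ 1/q := hiq_pos.le
  have hθ3 : (0:ℝ) ≤ 1/p - 1/q := by linarith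
  -- the ENNReal-valued functions
  set g : ℝ → ℝ≥0∞ := fun x => ENNReal.ofReal (f x) with hg_def
  set K : ℝ → ℝ≥0∞ := fun x => (‖L x‖₊ : ℝ≥0∞) with hK_def
  have hL_meas : Measurable L := by
    rw [hL]
    exact (Real.measurable_log.comp measurable_abs).indicator measurableSet_Ioo
  have hK_meas : Measurable K := hL_meas.enorm
  have hg_aem : AEMeasurable g volume :=
    ENNReal.measurable_ofReal.comp_aemeasurable hf_int.aemeasurable
  have hKz_meas : Measurable (fun z : ℝ × ℝ => K (z.1 - z.2)) :=
    hK_meas.comp (measurable_fst.sub measurable_snd)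
  set Gp : ℝ≥0∞ := ∫⁻ x, g x ^ p ∂volume with hGp_def
  set Kc : ℝ≥0∞ := ∫⁻ x, K x ^ (q/2) ∂volume with hKc_def
  -- identification of eLpNorms
  have hNp : eLpNorm f (ENNReal.ofReal p) volume = Gp ^ (1/p) := by
    rw [eLpNorm_eq_lintegral_rpow_enorm_toReal (by simp [hp0, not_le.mpr hp0]) ENNReal.ofReal_ne_top,
      ENNReal.toReal_ofReal hp0.le]
    congr 1
    apply lintegral_congr
    intro x
    rw [Real.enorm_eq_ofReal (hf_nonneg x)]
  have hNs : eLpNorm L (ENNReal.ofReal (q/2)) volume = Kc ^ (1/(q/2)) := by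
    rw [eLpNorm_eq_lintegral_rpow_enorm_toReal (by simp [not_le.mpr hc0]) ENNReal.ofReal_ne_top,
      ENNReal.toReal_ofReal hc0.le]
    rfl
  -- finiteness of ‖L‖_{q/2}
  have hKc_ne_top : Kc ≠ ⊤ := by
    have heq : Kc = ∫⁻ x, ENNReal.ofReal (|L x| ^ (q/2)) ∂volume := by
      apply lintegral_congr
      intro x
      rw [hK_def]
      simp only
      rw [← enorm_eq_nnnorm, Real.enorm_eq_ofReal_abs, ENNReal.ofReal_rpow_of_nonneg (abs_nonneg _) hc0.le]
    have hint : Integrable (fun x : ℝ => |L x| ^ (q/2)) volume := by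
      have hrw : (fun x : ℝ => |L x| ^ (q/2)) =
          Set.indicator (Set.Ioo (-(4*M)) (4*M)) (fun t : ℝ => |Real.log (|t|)| ^ (q/2)) := by
        funext x
        rw [hL]
        by_cases hx : x ∈ Set.Ioo (-(4*M)) (4*M)
        · rw [Set.indicator_of_mem hx, Set.indicator_of_mem hx]
        · rw [Set.indicator_of_notMem hx, Set.indicator_of_notMem hx, abs_zero,
            Real.zero_rpow hc0.ne']
      rw [hrw, integrable_indicator_iff measurableSet_Ioo]
      exact integrableOn_abs_log_abs_rpow hc1 (by linarith)
    rw [heq]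
    exact hint.lintegral_lt_top.ne
  have hGp_ne_top : Gp ≠ ⊤ := by
    have := hf_Lp.2
    rw [hNp] at this
    intro h
    rw [h, ENNReal.top_rpow_of_pos (by positivity : (0:ℝ) < 1/p)] at this
    exact absurd this (lt_irrefl _)
  -- pointwise nnnorm identity
  have hnn : ∀ z : ℝ × ℝ,
      (‖Real.log |z.1 - z.2| * f z.1 * f z.2‖₊ : ℝ≥0∞) = K (z.1 - z.2) * g z.1 * g z.2 := by
    intro z
    by_cases h1 : f z.1 = 0
    · simp [h1, hg_def]
    by_cases h2 : f z.2 = 0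
    · simp [h2, hg_def]
    have hz1 : z.1 ∈ Set.Ioo (-M) M := by
      by_contra hcon; exact h1 (hf_supp _ hcon)
    have hz2 : z.2 ∈ Set.Ioo (-M) M := by
      by_contra hcon; exact h2 (hf_supp _ hcon)
    have hmem : z.1 - z.2 ∈ Set.Ioo (-(4*M)) (4*M) := by
      constructor
      · have := hz1.1; have := hz2.2; simp only [Set.mem_Ioo] at *; linarith
      · have := hz1.2; have := hz2.1; simp only [Set.mem_Ioo] at *; linarith
    have hLeq : L (z.1 - z.2) = Real.log |z.1 - z.2| := by
      rw [hL]; exact Set.indicator_of_mem hmem _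
    rw [← hLeq, nnnorm_mul, nnnorm_mul, ENNReal.coe_mul, ENNReal.coe_mul,
      ← enorm_eq_nnnorm (f z.1), Real.enorm_eq_ofReal (hf_nonneg z.1),
      ← enorm_eq_nnnorm (f z.2), Real.enorm_eq_ofReal (hf_nonneg z.2)]
  -- the three Hölder factors
  set F1 : ℝ × ℝ → ℝ≥0∞ := fun z => g z.1 ^ p * K (z.1 - z.2) ^ (q/2) with hF1_def
  set F2 : ℝ × ℝ → ℝ≥0∞ := fun z => g z.2 ^ p * K (z.1 - z.2) ^ (q/2) with hF2_def
  set F3 : ℝ × ℝ → ℝ≥0∞ := fun z => g z.1 ^ p * g z.2 ^ p with hF3_def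
  have hF1_aem : AEMeasurable F1 ((volume : Measure ℝ).prod volume) :=
    (hg_aem.comp_fst.pow aemeasurable_const).mul ((hKz_meas.pow measurable_const).aemeasurable)
  have hF2_aem : AEMeasurable F2 ((volume : Measure ℝ).prod volume) :=
    (hg_aem.comp_snd.pow aemeasurable_const).mul ((hKz_meas.pow measurable_const).aemeasurable)
  have hF3_aem : AEMeasurable F3 ((volume : Measure ℝ).prod volume) :=
    (hg_aem.comp_fst.pow aemeasurable_const).mul (hg_aem.comp_snd.pow aemeasurable_const)
  -- value of the three integrals
  have hF1_int : ∫⁻ z, F1 z ∂((volume : Measure ℝ).prod volume) = Gp * Kc := by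
    rw [hF1_def, lintegral_prod _ hF1_aem]
    have hinner : ∀ x : ℝ, ∫⁻ y, g x ^ p * K (x - y) ^ (q/2) ∂volume = g x ^ p * Kc := by
      intro x
      have hm : Measurable (fun y : ℝ => K (x - y) ^ (q/2)) := by
        apply Measurable.pow _ measurable_const
        exact hK_meas.comp (measurable_const.sub measurable_id)
      rw [lintegral_const_mul _ hm]
      congr 1
      exact lint_shift (fun u => K u ^ (q/2)) (hK_meas.pow measurable_const) x
    simp_rw [hF1_def, hinner]
    exact lintegral_mul_const'' _ (hg_aem.pow aemeasurable_const)
  have hF2_int : ∫⁻ z, F2 z ∂((volume : Measure ℝ).prod volume) = Gp * Kc := by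
    rw [hF2_def, lintegral_prod_symm _ hF2_aem]
    have hinner : ∀ y : ℝ, ∫⁻ x, g y ^ p * K (x - y) ^ (q/2) ∂volume = g y ^ p * Kc := by
      intro y
      have hm : Measurable (fun x : ℝ => K (x - y) ^ (q/2)) := by
        apply Measurable.pow _ measurable_const
        exact hK_meas.comp (measurable_id.sub measurable_const)
      rw [lintegral_const_mul _ hm]
      congr 1
      exact lintegral_sub_right_eq_self (fun u => K u ^ (q/2)) y
    simp_rw [hF2_def, hinner]
    exact lintegral_mul_const'' _ (hg_aem.pow aemeasurable_const)
  have hF3_int : ∫⁻ z, F3 z ∂((volume : Measure ℝ).prod volume) = Gp * Gp := by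
    rw [hF3_def]
    exact lintegral_prod_mul (hg_aem.pow aemeasurable_const) (hg_aem.pow aemeasurable_const)
  -- Hölder with three exponents
  have hI : ∫⁻ z, K (z.1 - z.2) * g z.1 * g z.2 ∂((volume : Measure ℝ).prod volume) ≤
      Gp ^ (1/p) * Gp ^ (1/p) * Kc ^ (1/(q/2)) := by
    have hinv : p⁻¹ + q⁻¹ = 1 := by simpa [one_div] using hpq
    have hqinv : (0:ℝ) ≤ q⁻¹ := inv_nonneg.mpr hq0.le
    have hpqinv : q⁻¹ ≤ p⁻¹ := by
      rw [← one_div, ← one_div]; linarith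
    have key := ENNReal.lintegral_prod_norm_pow_le (μ := (volume : Measure ℝ).prod volume)
      (Finset.univ : Finset (Fin 3)) (f := ![F1, F2, F3])
      (fun i _ => by fin_cases i <;> simp [hF1_aem, hF2_aem, hF3_aem])
      (p := ![1/q, 1/q, 1/p - 1/q])
      (by simp [Fin.sum_univ_three]; linarith)
      (fun i _ => by fin_cases i <;> simp <;> linarith)
    simp only [Fin.prod_univ_three, Matrix.cons_val_zero, Matrix.cons_val_one, Matrix.head_cons,
      Matrix.cons_val_two, Matrix.tail_cons] at key
    have hpt : ∀ a : ℝ × ℝ, F1 a ^ (1/q) * F2 a ^ (1/q) * F3 a ^ (1/p - 1/q) =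
        K (a.1 - a.2) * g a.1 * g a.2 := by
      intro a
      rw [hF1_def, hF2_def, hF3_def]
      simp only
      have hpθ : (0:ℝ) ≤ p * (1/q) := by positivity
      have hpθ3 : (0:ℝ) ≤ p * (1/p - 1/q) := by nlinarith
      have hcθ : (0:ℝ) ≤ (q/2) * (1/q) := by positivity
      have e1 : p * (1/q) + p * (1/p - 1/q) = 1 := by field_simp; ring
      have e2 : (q/2) * (1/q) + (q/2) * (1/q) = 1 := by field_simp; ring
      rw [ENNReal.mul_rpow_of_nonneg _ _ hθ, ENNReal.mul_rpow_of_nonneg _ _ hθ,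
        ENNReal.mul_rpow_of_nonneg _ _ hθ3, ← ENNReal.rpow_mul, ← ENNReal.rpow_mul,
        ← ENNReal.rpow_mul, ← ENNReal.rpow_mul, ← ENNReal.rpow_mul]
      calc g a.1 ^ (p * (1/q)) * K (a.1 - a.2) ^ ((q/2) * (1/q)) *
            (g a.2 ^ (p * (1/q)) * K (a.1 - a.2) ^ ((q/2) * (1/q))) *
            (g a.1 ^ (p * (1/p - 1/q)) * g a.2 ^ (p * (1/p - 1/q)))
          = (K (a.1 - a.2) ^ ((q/2) * (1/q)) * K (a.1 - a.2) ^ ((q/2) * (1/q))) *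
            (g a.1 ^ (p * (1/q)) * g a.1 ^ (p * (1/p - 1/q))) *
            (g a.2 ^ (p * (1/q)) * g a.2 ^ (p * (1/p - 1/q))) := by ring
        _ = K (a.1 - a.2) * g a.1 * g a.2 := by
            rw [← ENNReal.rpow_add_of_nonneg _ _ hcθ hcθ,
              ← ENNReal.rpow_add_of_nonneg _ _ hpθ hpθ3,
              ← ENNReal.rpow_add_of_nonneg _ _ hpθ hpθ3, e1, e2,
              ENNReal.rpow_one, ENNReal.rpow_one, ENNReal.rpow_one]
    calc ∫⁻ z, K (z.1 - z.2) * g z.1 * g z.2 ∂((volume : Measure ℝ).prod volume)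
        = ∫⁻ z, F1 z ^ (1/q) * F2 z ^ (1/q) * F3 z ^ (1/p - 1/q)
          ∂((volume : Measure ℝ).prod volume) := (lintegral_congr hpt).symm
      _ ≤ (∫⁻ z, F1 z ∂((volume : Measure ℝ).prod volume)) ^ (1/q) *
          (∫⁻ z, F2 z ∂((volume : Measure ℝ).prod volume)) ^ (1/q) *
          (∫⁻ z, F3 z ∂((volume : Measure ℝ).prod volume)) ^ (1/p - 1/q) := key
      _ = (Gp * Kc) ^ (1/q) * (Gp * Kc) ^ (1/q) * (Gp * Gp) ^ (1/p - 1/q) := by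
          rw [hF1_int, hF2_int, hF3_int]
      _ = Gp ^ (1/p) * Gp ^ (1/p) * Kc ^ (1/(q/2)) := by
          have e3 : 1/q + (1/p - 1/q) = 1/p := by ring
          have e4 : 1/q + 1/q = 1/(q/2) := by field_simp; ring
          rw [ENNReal.mul_rpow_of_nonneg _ _ hθ, ENNReal.mul_rpow_of_nonneg _ _ hθ3]
          calc Gp ^ (1/q) * Kc ^ (1/q) * (Gp ^ (1/q) * Kc ^ (1/q)) *
                (Gp ^ (1/p - 1/q) * Gp ^ (1/p - 1/q))
              = (Gp ^ (1/q) * Gp ^ (1/p - 1/q)) * (Gp ^ (1/q) * Gp ^ (1/p - 1/q)) *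
                (Kc ^ (1/q) * Kc ^ (1/q)) := by ring
            _ = Gp ^ (1/p) * Gp ^ (1/p) * Kc ^ (1/(q/2)) := by
                rw [← ENNReal.rpow_add_of_nonneg _ _ hθ hθ3,
                  ← ENNReal.rpow_add_of_nonneg _ _ hθ hθ, e3, e4]
  -- wrap up
  set B : ℝ≥0∞ := eLpNorm f (ENNReal.ofReal p) volume * eLpNorm f (ENNReal.ofReal p) volume *
    eLpNorm L (ENNReal.ofReal (q/2)) volume with hB_def
  have hB_ne_top : B ≠ ⊤ := by
    apply ENNReal.mul_ne_top (ENNReal.mul_ne_top hf_Lp.2.ne hf_Lp.2.ne)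
    rw [hNs]
    exact (ENNReal.rpow_lt_top_of_nonneg (by positivity) hKc_ne_top).ne
  have hI' : ∫⁻ z, (‖Real.log |z.1 - z.2| * f z.1 * f z.2‖₊ : ℝ≥0∞)
      ∂((volume : Measure ℝ).prod volume) ≤ B := by
    calc ∫⁻ z, (‖Real.log |z.1 - z.2| * f z.1 * f z.2‖₊ : ℝ≥0∞)
          ∂((volume : Measure ℝ).prod volume)
        = ∫⁻ z, K (z.1 - z.2) * g z.1 * g z.2 ∂((volume : Measure ℝ).prod volume) :=
          lintegral_congr hnn
      _ ≤ Gp ^ (1/p) * Gp ^ (1/p) * Kc ^ (1/(q/2)) := hI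
      _ = B := by rw [hB_def, hNp, hNs]
  have hmeasF : AEStronglyMeasurable (fun z : ℝ × ℝ => Real.log |z.1 - z.2| * f z.1 * f z.2)
      ((volume : Measure ℝ).prod volume) := by
    apply AEStronglyMeasurable.mul
    apply AEStronglyMeasurable.mul
    · exact ((measurable_fst.sub measurable_snd).abs.log).aestronglyMeasurable
    · exact hf_int.1.comp_fst
    · exact hf_int.1.comp_snd
  have hint : Integrable (fun z : ℝ × ℝ => Real.log |z.1 - z.2| * f z.1 * f z.2)
      ((volume : Measure ℝ).prod volume) := by
    refine ⟨hmeasF, ?_⟩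
    exact lt_of_le_of_lt hI' hB_ne_top.lt_top
  refine ⟨hint, ?_⟩
  have hbound := enorm_integral_le_lintegral_enorm
    (μ := (volume : Measure ℝ).prod volume)
    (f := fun z : ℝ × ℝ => Real.log |z.1 - z.2| * f z.1 * f z.2)
  have hle : (‖∫ z : ℝ × ℝ, Real.log |z.1 - z.2| * f z.1 * f z.2
      ∂((volume : Measure ℝ).prod volume)‖₊ : ℝ≥0∞) ≤ B := le_trans hbound hI'
  have := ENNReal.toReal_mono hB_ne_top hle
  rw [ENNReal.coe_toReal, coe_nnnorm, Real.norm_eq_abs] at this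
  calc |∫ z : ℝ × ℝ, Real.log |z.1 - z.2| * f z.1 * f z.2
      ∂((volume : Measure ℝ).prod volume)| ≤ B.toReal := this
    _ = _ := by rw [hB_def, ENNReal.toReal_mul, ENNReal.toReal_mul]
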